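/- Let E, H₁, H₂ be complex Hilbert spaces. Suppose U₁ on E ⊕ H₁ given by U₁(e, h₁) = (B₁ h₁, C₁ e + D₁ h₁) is an isometry (where B₁ ∈ B(H₁, E), C₁ ∈ B(E, H₁), D₁ ∈ B(H₁)), and U₂ on E ⊕ H₂ given by U₂(e, h₂) = (B₂ h₂, C₂ e + D₂ h₂) is an isometry (where B₂ ∈ B(H₂, E), C₂ ∈ B(E, H₂), D₂ ∈ B(H₂)). Then: (i) the operator U on E ⊕ H₁ ⊕ H₂ defined by U(e, h₁, h₂) = (B₁ h₁, D₁ h₁ + C₁ B₂ h₂, C₂ e + D₂ h₂) is an isometry; (ii) C₁*C₁ = I_E and C₁*D₁ = 0; in particular the block of U mapping H₂ into H₁ equals L ∘ B₂ where L := C₁ is an isometry satisfying L*D₁ = 0. -/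

import Mathlib

open ContinuousLinearMap

/-- The element `(x, y)` of the Hilbert-space direct sum `X ⊕ Y`,
modelled as `WithLp 2 (X × Y)`. -/
noncomputable def mk2 {X Y : Type*} (x : X) (y : Y) : WithLp 2 (X × Y) :=
  (WithLp.equiv 2 (X × Y)).symm (x, y)

/-- The element `(e, h₁, h₂)` of the Hilbert-space direct sum `E ⊕ H₁ ⊕ H₂`,
modelled as `WithLp 2 (E × WithLp 2 (H₁ × H₂))`. -/
noncomputable def mk3 {E H₁ H₂ : Type*} (e : E) (h₁ : H₁) (h₂ : H₂) :
    WithLp 2 (E × WithLp 2 (H₁ × H₂)) :=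
  (WithLp.equiv 2 _).symm (e, (WithLp.equiv 2 (H₁ × H₂)).symm (h₁, h₂))

open scoped ComplexInnerProductSpace in
private lemma nmk2_aux {X Y : Type*} [NormedAddCommGroup X] [NormedAddCommGroup Y]
    (x : X) (y : Y) : ‖mk2 x y‖ ^ 2 = ‖x‖ ^ 2 + ‖y‖ ^ 2 := by
  rw [WithLp.prod_norm_sq_eq_of_L2]
  rfl

private lemma nmk3_aux {E H₁ H₂ : Type*} [NormedAddCommGroup E] [NormedAddCommGroup H₁]
    [NormedAddCommGroup H₂] (e : E) (h₁ : H₁) (h₂ : H₂) :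
    ‖mk3 e h₁ h₂‖ ^ 2 = ‖e‖ ^ 2 + ‖h₁‖ ^ 2 + ‖h₂‖ ^ 2 := by
  have h2 : (mk3 e h₁ h₂).snd = mk2 h₁ h₂ := rfl
  rw [WithLp.prod_norm_sq_eq_of_L2, h2, nmk2_aux]
  show ‖e‖ ^ 2 + (‖h₁‖ ^ 2 + ‖h₂‖ ^ 2) = _
  ring

open scoped ComplexInnerProductSpace


/-- If `U₁(e, h₁) = (B₁ h₁, C₁ e + D₁ h₁)` and
`U₂(e, h₂) = (B₂ h₂, C₂ e + D₂ h₂)` are isometries, then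
(i) `U(e, h₁, h₂) = (B₁ h₁, D₁ h₁ + C₁ B₂ h₂, C₂ e + D₂ h₂)` is an isometry;
(ii) `C₁* C₁ = I` and `C₁* D₁ = 0`; in particular the block of `U` mapping `H₂`
into `H₁` equals `L ∘ B₂` where `L := C₁` is an isometry with `L* D₁ = 0`. -/
theorem statement7
    {E H₁ H₂ : Type*}
    [NormedAddCommGroup E] [InnerProductSpace ℂ E] [CompleteSpace E]
    [NormedAddCommGroup H₁] [InnerProductSpace ℂ H₁] [CompleteSpace H₁]
    [NormedAddCommGroup H₂] [InnerProductSpace ℂ H₂] [CompleteSpace H₂]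
    (B₁ : H₁ →L[ℂ] E) (C₁ : E →L[ℂ] H₁) (D₁ : H₁ →L[ℂ] H₁)
    (B₂ : H₂ →L[ℂ] E) (C₂ : E →L[ℂ] H₂) (D₂ : H₂ →L[ℂ] H₂)
    (U₁ : WithLp 2 (E × H₁) →L[ℂ] WithLp 2 (E × H₁))
    (hU₁ : ∀ (e : E) (h₁ : H₁), U₁ (mk2 e h₁) = mk2 (B₁ h₁) (C₁ e + D₁ h₁))
    (hIso₁ : Isometry U₁)
    (U₂ : WithLp 2 (E × H₂) →L[ℂ] WithLp 2 (E × H₂))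
    (hU₂ : ∀ (e : E) (h₂ : H₂), U₂ (mk2 e h₂) = mk2 (B₂ h₂) (C₂ e + D₂ h₂))
    (hIso₂ : Isometry U₂)
    (U : WithLp 2 (E × WithLp 2 (H₁ × H₂)) →L[ℂ] WithLp 2 (E × WithLp 2 (H₁ × H₂)))
    (hU : ∀ (e : E) (h₁ : H₁) (h₂ : H₂),
      U (mk3 e h₁ h₂) = mk3 (B₁ h₁) (D₁ h₁ + C₁ (B₂ h₂)) (C₂ e + D₂ h₂)) :
    Isometry U ∧
    adjoint C₁ ∘L C₁ = ContinuousLinearMap.id ℂ E ∧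
    adjoint C₁ ∘L D₁ = 0 ∧
    Isometry C₁ ∧
    (∀ h₂ : H₂, U (mk3 (0 : E) (0 : H₁) h₂) = mk3 (0 : E) ((C₁ ∘L B₂) h₂) (D₂ h₂)) := by

  classical
  have key1 : ∀ (e : E) (h₁ : H₁),
      ‖B₁ h₁‖ ^ 2 + ‖C₁ e + D₁ h₁‖ ^ 2 = ‖e‖ ^ 2 + ‖h₁‖ ^ 2 := by
    intro e h
    have h0 := hIso₁.norm_map_of_map_zero (map_zero U₁) (mk2 e h)
    rw [hU₁] at h0
    calc ‖B₁ h‖ ^ 2 + ‖C₁ e + D₁ h‖ ^ 2 = ‖mk2 (B₁ h) (C₁ e + D₁ h)‖ ^ 2 := (nmk2_aux _ _).symm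
      _ = ‖mk2 e h‖ ^ 2 := by rw [h0]
      _ = ‖e‖ ^ 2 + ‖h‖ ^ 2 := nmk2_aux _ _
  have key2 : ∀ (e : E) (h₂ : H₂),
      ‖B₂ h₂‖ ^ 2 + ‖C₂ e + D₂ h₂‖ ^ 2 = ‖e‖ ^ 2 + ‖h₂‖ ^ 2 := by
    intro e h
    have h0 := hIso₂.norm_map_of_map_zero (map_zero U₂) (mk2 e h)
    rw [hU₂] at h0
    calc ‖B₂ h‖ ^ 2 + ‖C₂ e + D₂ h‖ ^ 2 = ‖mk2 (B₂ h) (C₂ e + D₂ h)‖ ^ 2 := (nmk2_aux _ _).symm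
      _ = ‖mk2 e h‖ ^ 2 := by rw [h0]
      _ = ‖e‖ ^ 2 + ‖h‖ ^ 2 := nmk2_aux _ _
  have hC₁norm : ∀ e : E, ‖C₁ e‖ = ‖e‖ := by
    intro e
    have := key1 e 0
    simp only [map_zero, norm_zero, add_zero, zero_add] at this
    nlinarith [norm_nonneg (C₁ e), norm_nonneg e, sq_nonneg (‖C₁ e‖ - ‖e‖)]
  have hBD : ∀ h : H₁, ‖B₁ h‖ ^ 2 + ‖D₁ h‖ ^ 2 = ‖h‖ ^ 2 := by
    intro h
    have := key1 0 h
    simpa using this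
  have hre : ∀ (e : E) (h : H₁), RCLike.re ((inner ℂ (C₁ e) (D₁ h) : ℂ)) = 0 := by
    intro e h
    have h1 := key1 e h
    have h2 := hBD h
    have h3 := @norm_add_sq ℂ _ _ _ _ (C₁ e) (D₁ h)
    have h4 : ‖C₁ e‖ = ‖e‖ := hC₁norm e
    rw [h3, h4] at h1
    linarith
  have hinner : ∀ (e : E) (h : H₁), (inner ℂ (C₁ e) (D₁ h) : ℂ) = 0 := by
    intro e h
    have hr := hre e h
    have hi := hre (Complex.I • e) h
    rw [map_smul, inner_smul_left] at hi
    simp only [RCLike.re_to_complex] at hr hi ⊢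
    rw [Complex.mul_re] at hi
    simp only [Complex.conj_I, Complex.neg_re, Complex.I_re, Complex.neg_im,
      Complex.I_im] at hi
    apply Complex.ext
    · exact hr
    · simpa using hi
  have hIsoC₁ : Isometry C₁ := AddMonoidHomClass.isometry_of_norm C₁ hC₁norm
  have hadjC : adjoint C₁ ∘L C₁ = ContinuousLinearMap.id ℂ E := by
    have := (norm_map_iff_adjoint_comp_self C₁).mp hC₁norm
    rw [this]; rfl
  have hadjD : adjoint C₁ ∘L D₁ = 0 := by
    ext h
    refine ext_inner_left ℂ fun v => ?_
    rw [comp_apply, adjoint_inner_right]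
    simp [hinner v h]
  refine ⟨?_, hadjC, hadjD, hIsoC₁, ?_⟩
  · apply AddMonoidHomClass.isometry_of_norm
    intro x
    have hx : x = mk3 x.fst x.snd.fst x.snd.snd := rfl
    rw [hx, hU]
    have hmid : ‖D₁ x.snd.fst + C₁ (B₂ x.snd.snd)‖ ^ 2 = ‖D₁ x.snd.fst‖ ^ 2 + ‖B₂ x.snd.snd‖ ^ 2 := by
      have h3 := @norm_add_sq ℂ _ _ _ _ (D₁ x.snd.fst) (C₁ (B₂ x.snd.snd))
      have hz : (inner ℂ (D₁ x.snd.fst) (C₁ (B₂ x.snd.snd)) : ℂ) = 0 :=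
        inner_eq_zero_symm.mpr (hinner (B₂ x.snd.snd) x.snd.fst)
      rw [hz] at h3
      simp only [map_zero, mul_zero, add_zero] at h3
      rw [h3, hC₁norm]
    have hsq : ‖mk3 (B₁ x.snd.fst) (D₁ x.snd.fst + C₁ (B₂ x.snd.snd)) (C₂ x.fst + D₂ x.snd.snd)‖ ^ 2
        = ‖mk3 x.fst x.snd.fst x.snd.snd‖ ^ 2 := by
      rw [nmk3_aux, nmk3_aux, hmid]
      have h1 := hBD x.snd.fst
      have h2 := key2 x.fst x.snd.snd
      linarith
    nlinarith [norm_nonneg (mk3 (B₁ x.snd.fst) (D₁ x.snd.fst + C₁ (B₂ x.snd.snd)) (C₂ x.fst + D₂ x.snd.snd)),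
      norm_nonneg (mk3 x.fst x.snd.fst x.snd.snd),
      sq_nonneg (‖mk3 (B₁ x.snd.fst) (D₁ x.snd.fst + C₁ (B₂ x.snd.snd)) (C₂ x.fst + D₂ x.snd.snd)‖
        - ‖mk3 x.fst x.snd.fst x.snd.snd‖)]
  · intro h₂
    rw [hU]
    simp
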